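/- With Λ̃ = Λ₀ ⊕ U, v = u₁ + m̃u₂, δ = u₁ − m̃u₂, Λ = v^⊥: if κ ∈ Λ is primitive with κ_* = kδ_* in D(Λ) ≅ Z/2m̃Z and d = gcd(2m̃, k), then div(κ) = 2m̃/d, and the vector s = (dκ − kv)/(2m̃) is an integral element of Λ̃ with (s, v) = −k. -/

import Mathlib

theorem aux_zsmul_cancel {M : Type} [AddCommGroup M] [Module ℤ M] [Module.Free ℤ M]
    {c : ℤ} (hc : c ≠ 0) {z : M} (hz : c • z = 0) : z = 0 := by
  classical
  let bb := Module.Free.chooseBasis ℤ M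
  let f : M →+ (Module.Free.ChooseBasisIndex ℤ M →₀ ℤ) := bb.repr.toLinearMap.toAddMonoidHom
  have hfz : f z = 0 := by
    have h2 : f (c • z) = c • f z := map_zsmul f c z
    rw [hz, map_zero] at h2
    ext i
    have h3 : (Finsupp.applyAddHom (M := ℤ) i) (c • f z) = c • (f z) i :=
      map_zsmul (Finsupp.applyAddHom i) c (f z)
    rw [← h2, map_zero] at h3
    have h4 : c * (f z) i = 0 := by
      have := (zsmul_eq_mul ((f z) i) c).symm.trans h3.symm
      simpa using this
    rcases mul_eq_zero.mp h4 with h | h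
    · exact absurd h hc
    · simp [h]
  have : bb.repr z = 0 := hfz
  exact bb.repr.map_eq_zero_iff.mp this


/-- With `Λ̃ = Λ₀ ⊕ U`, `v = u₁ + m̃u₂`, `δ = u₁ − m̃u₂`, `Λ = v^⊥`: if `κ ∈ Λ` is
primitive with `κ_* = kδ_*` in `D(Λ) ≅ ℤ/2m̃ℤ` and `d = gcd(2m̃, k)`, then
`div(κ) = 2m̃/d`, and `s = (dκ − kv)/(2m̃)` is an integral element of `Λ̃` with
`(s, v) = −k`.  Here `mt` plays the role of `m̃` and `γ` of `div(κ)`. -/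
theorem stmt_10 (Λ₀ : Type) [AddCommGroup Λ₀] [Module ℤ Λ₀]
    [Module.Free ℤ Λ₀] [Module.Finite ℤ Λ₀]
    (B : Λ₀ →ₗ[ℤ] Λ₀ →ₗ[ℤ] ℤ)
    (hsymm : ∀ x y, B x y = B y x)
    (heven : ∀ x, 2 ∣ B x x)
    (hunimod : Function.Bijective fun x => B x)
    (mt : ℕ) (hmt : 1 ≤ mt)
    (Btil : Λ₀ × ℤ × ℤ → Λ₀ × ℤ × ℤ → ℤ)
    (hBtil : ∀ w z, Btil w z = B w.1 z.1 + w.2.1 * z.2.2 + w.2.2 * z.2.1)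
    (v δ : Λ₀ × ℤ × ℤ)
    (hv : v = (0, 1, (mt : ℤ))) (hδ : δ = (0, 1, -(mt : ℤ)))
    (κ : Λ₀ × ℤ × ℤ)
    (hκΛ : Btil κ v = 0)
    (hprim : ∀ (c : ℤ) (w : Λ₀ × ℤ × ℤ), κ = c • w → IsUnit c)
    (γ : ℕ) (hγpos : 0 < γ)
    (hdiv : ∀ t : ℤ, ((γ : ℤ) ∣ t ↔ ∃ w, Btil w v = 0 ∧ Btil κ w = t))
    (k : ℤ) (hk : |k| ≤ (mt : ℤ))
    (hstar : ∃ w, Btil w v = 0 ∧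
      (2 * (mt : ℤ)) • κ - (k * (γ : ℤ)) • δ = ((2 * (mt : ℤ)) * (γ : ℤ)) • w)
    (d : ℕ) (hd : d = Int.gcd (2 * (mt : ℤ)) k) :
    γ = 2 * mt / d ∧
    ∃ s : Λ₀ × ℤ × ℤ, (2 * (mt : ℤ)) • s = (d : ℤ) • κ - k • v ∧ Btil s v = -k := by
  obtain ⟨w, hwv, hw⟩ := hstar
  subst hv hδ
  set G : ℤ := (γ : ℤ) with hGdef
  have hG0 : (0:ℤ) < G := by rw [hGdef]; exact_mod_cast hγpos
  have hM0 : (0:ℤ) < 2 * (mt:ℤ) := by positivity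
  have hcomp : ∀ (c : ℤ) (p : Λ₀ × ℤ × ℤ), c • p = (c • p.1, c * p.2.1, c * p.2.2) := by
    intro c p
    refine Prod.ext ?_ (Prod.ext ?_ ?_) <;> simp
  have hκ2 : κ.2.2 = -((mt:ℤ) * κ.2.1) := by
    have h := (hBtil κ (0, 1, (mt : ℤ))).symm.trans hκΛ
    simp at h
    linarith [mul_comm κ.2.1 ((mt:ℤ))]
  have hw1 : (2*(mt:ℤ)) • κ.1 = (2*(mt:ℤ)*G) • w.1 := by
    have h := congrArg Prod.fst hw
    simp at h
    rw [← h]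
    exact (sub_eq_self.mpr (zsmul_zero (α := Λ₀) (k * G))).symm
  have hw2 : 2*(mt:ℤ) * κ.2.1 - k*G = 2*(mt:ℤ)*G * w.2.1 := by
    have h := congrArg (fun p : Λ₀ × ℤ × ℤ => p.2.1) hw
    simp [smul_eq_mul] at h
    linarith
  have hκ1 : κ.1 = G • w.1 := by
    have h0 : (2*(mt:ℤ)) • (κ.1 - G • w.1) = 0 := by
      rw [zsmul_sub, hw1, mul_zsmul, sub_self]
    exact sub_eq_zero.mp (aux_zsmul_cancel (by positivity) h0)
  have hgcd1 : Int.gcd G κ.2.1 = 1 := by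
    set g : ℕ := Int.gcd G κ.2.1 with hg
    obtain ⟨a, ha⟩ : (g:ℤ) ∣ G := Int.gcd_dvd_left _ _
    obtain ⟨b, hb⟩ : (g:ℤ) ∣ κ.2.1 := Int.gcd_dvd_right _ _
    have hκeq : κ = (g:ℤ) • (a • w.1, b, -((mt:ℤ)*b)) := by
      rw [hcomp]
      refine Prod.ext ?_ (Prod.ext ?_ ?_)
      · show κ.1 = (g:ℤ) • a • w.1
        rw [hκ1, ha, mul_zsmul]
      · exact hb
      · show κ.2.2 = (g:ℤ) * -((mt:ℤ)*b)
        rw [hκ2, hb]; ring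
    have hu := hprim _ _ hκeq
    rcases Int.isUnit_iff.mp hu with h | h <;> omega
  have hcop : IsCoprime G κ.2.1 := Int.isCoprime_iff_gcd_eq_one.mpr hgcd1
  have hdvd : G ∣ 2*(mt:ℤ) * κ.2.1 := by
    refine (hdiv _).mpr ⟨(0, -1, (mt:ℤ)), ?_, ?_⟩
    · rw [hBtil]; simp
    · rw [hBtil]; simp [hκ2]; ring
  obtain ⟨q, hq⟩ : G ∣ 2*(mt:ℤ) := hcop.dvd_of_dvd_mul_right hdvd
  have hq0 : 0 < q := by nlinarith
  have h3 : q*κ.2.1 - k = q*G*w.2.1 := by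
    have h2 : G*(q*κ.2.1 - k) = G*(q*G*w.2.1) := by
      rw [hq] at hw2; linear_combination hw2
    exact mul_left_cancel₀ (ne_of_gt hG0) h2
  have hcop2 : IsCoprime G (κ.2.1 - G*w.2.1) := by
    have h := hcop.add_mul_left_right (-w.2.1)
    have he : κ.2.1 + G * -w.2.1 = κ.2.1 - G*w.2.1 := by ring
    rwa [he] at h
  have hdq : (d:ℤ) = q := by
    have hkf : k = (κ.2.1 - G*w.2.1) * q := by linarith
    have hMf : 2*(mt:ℤ) = G * q := hq
    have hgm : Int.gcd (G*q) ((κ.2.1 - G*w.2.1)*q)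
        = Int.gcd G (κ.2.1 - G*w.2.1) * q.natAbs := Int.gcd_mul_right ..
    have hc1 : Int.gcd G (κ.2.1 - G*w.2.1) = 1 :=
      Int.isCoprime_iff_gcd_eq_one.mp hcop2
    have hdn : d = q.natAbs := by
      rw [hd, hMf, hkf, hgm, hc1, one_mul]
    rw [hdn, Int.natAbs_of_nonneg (le_of_lt hq0)]
  have hdpos : 0 < d := by
    have : (0:ℤ) < (d:ℤ) := hdq ▸ hq0
    exact_mod_cast this
  constructor
  · have hnat : 2 * mt = γ * d := by
      have : (2*(mt:ℤ)) = (γ:ℤ) * (d:ℤ) := by rw [hdq]; exact hq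
      exact_mod_cast this
    rw [hnat, Nat.mul_div_cancel _ hdpos]
  · refine ⟨(w.1, w.2.1, (mt:ℤ)*w.2.1 - q*κ.2.1), ?_, ?_⟩
    · rw [hdq, hcomp, hcomp, hcomp]
      refine Prod.ext ?_ (Prod.ext ?_ ?_)
      · show (2*(mt:ℤ)) • w.1 = q • κ.1 - k • (0:Λ₀)
        rw [zsmul_zero, sub_zero, hκ1, ← mul_zsmul,
          show q*G = 2*(mt:ℤ) from by linear_combination -hq]
      · show 2*(mt:ℤ) * w.2.1 = q * κ.2.1 - k * 1
        linear_combination w.2.1*hq - h3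
      · show 2*(mt:ℤ) * ((mt:ℤ)*w.2.1 - q*κ.2.1) = q * κ.2.2 - k * (mt:ℤ)
        linear_combination (-q)*hκ2 - (mt:ℤ)*h3 + (mt:ℤ)*w.2.1*hq
    · rw [hBtil]
      simp only [map_zero, LinearMap.zero_apply]
      linear_combination w.2.1 * hq - h3
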